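/- arXiv:2103.06392 — 4 statements merged into one kernel-verified Lean document; each statement's English description precedes it below -/
import Mathlib

section
/- Suppose the treatment design D is such that each exposure x_i has positive variance, i.e. Var[x_i(z)] > 0 for all i ∈ {1,…,n}. Then under the linear response assumption the ERL estimator is unbiased: E[τ̂(z)] = τ, where the expectation is over z ∼ D. -/
open Finset Matrix

/-- The sign map from Booleans to `{-1, 1} ⊆ ℝ`. -/
def sgn (b : Bool) : ℝ := if b then 1 else -1

/-- Expectation of `f` under the (finitely supported) design `D`. -/
noncomputable def pexp {α : Type*} [Fintype α] (D f : α → ℝ) : ℝ :=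
  ∑ ω, D ω * f ω

/-- Variance of `f` under the design `D`. -/
noncomputable def pvar {α : Type*} [Fintype α] (D f : α → ℝ) : ℝ :=
  pexp D (fun ω => (f ω - pexp D f) ^ 2)

/-- Covariance of `f` and `g` under the design `D`. -/
noncomputable def pcov {α : Type*} [Fintype α] (D f g : α → ℝ) : ℝ :=
  pexp D (fun ω => (f ω - pexp D f) * (g ω - pexp D g))

/-- If every exposure has positive variance, the ERL estimator is an
unbiased estimate of the average treatment effect: E[τ̂] = τ.
Treatment vectors in `{-1,1}^m` are encoded as `ω : Fin m → Bool` via `sgn`;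
the all-ones vector is `fun _ => true` and the all-minus-ones vector is `fun _ => false`. -/
theorem erl_unbiased
    (n m : ℕ) (hn : 0 < n) (hm : 0 < m)
    (W : Matrix (Fin n) (Fin m) ℝ)
    (hWnn : ∀ i j, 0 ≤ W i j)
    (hWrow : ∀ i, ∑ j, W i j = 1)
    (D : (Fin m → Bool) → ℝ) (hD0 : ∀ ω, 0 ≤ D ω) (hD1 : ∑ ω, D ω = 1)
    (μ β : Fin n → ℝ)
    (x : Fin n → (Fin m → Bool) → ℝ)
    (hx : ∀ i ω, x i ω = ∑ j, W i j * sgn (ω j))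
    (Y : Fin n → (Fin m → Bool) → ℝ)
    (hY : ∀ i ω, Y i ω = μ i * x i ω + β i)
    (hvar : ∀ i, 0 < pvar D (x i))
    (τhat : (Fin m → Bool) → ℝ)
    (hτhat : ∀ ω, τhat ω = (2 / n : ℝ) *
      ∑ i, Y i ω * ((x i ω - pexp D (x i)) / pvar D (x i)))
    (τ : ℝ)
    (hτ : τ = (1 / n : ℝ) * ∑ i, (Y i (fun _ => true) - Y i (fun _ => false))) :
    pexp D τhat = τ := by

  have key : ∀ i, ∑ ω, D ω * (Y i ω * ((x i ω - pexp D (x i)) / pvar D (x i))) = μ i := by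
    intro i
    have hV : pvar D (x i) ≠ 0 := (hvar i).ne'
    have hmean : ∑ ω, D ω * (x i ω - pexp D (x i)) = 0 := by
      have : ∑ ω, D ω * (x i ω - pexp D (x i))
          = (∑ ω, D ω * x i ω) - (∑ ω, D ω) * pexp D (x i) := by
        rw [Finset.sum_mul, ← Finset.sum_sub_distrib]
        exact Finset.sum_congr rfl fun ω _ => by ring
      rw [this, hD1]
      simp [pexp]
    have hvarid : ∑ ω, D ω * (x i ω - pexp D (x i)) ^ 2 = pvar D (x i) := rfl
    have hsum : ∑ ω, D ω * (Y i ω * (x i ω - pexp D (x i))) = μ i * pvar D (x i) := by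
      have h1 : ∀ ω, D ω * (Y i ω * (x i ω - pexp D (x i)))
          = μ i * (D ω * (x i ω - pexp D (x i)) ^ 2)
            + (μ i * pexp D (x i) + β i) * (D ω * (x i ω - pexp D (x i))) := by
        intro ω; rw [hY]; ring
      simp_rw [h1]
      rw [Finset.sum_add_distrib, ← Finset.mul_sum, ← Finset.mul_sum, hmean, hvarid]
      ring
    have h2 : ∀ ω, D ω * (Y i ω * ((x i ω - pexp D (x i)) / pvar D (x i)))
        = (D ω * (Y i ω * (x i ω - pexp D (x i)))) * (pvar D (x i))⁻¹ := by
      intro ω; field_simp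
    simp_rw [h2]
    rw [← Finset.sum_mul, hsum, mul_assoc, mul_inv_cancel₀ hV, mul_one]
  have hlhs : pexp D τhat = (2 / n : ℝ) * ∑ i, μ i := by
    unfold pexp
    simp_rw [hτhat]
    have : ∀ ω, D ω * ((2 / n : ℝ) * ∑ i, Y i ω * ((x i ω - pexp D (x i)) / pvar D (x i)))
        = (2 / n : ℝ) * ∑ i, D ω * (Y i ω * ((x i ω - pexp D (x i)) / pvar D (x i))) := by
      intro ω; rw [Finset.mul_sum, Finset.mul_sum, Finset.mul_sum]
      exact Finset.sum_congr rfl fun i _ => by ring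
    simp_rw [this]
    rw [← Finset.mul_sum, Finset.sum_comm]
    congr 1
    exact Finset.sum_congr rfl fun i _ => key i
  have hxt : ∀ i, x i (fun _ => true) = 1 := fun i => by
    simp [hx, sgn, hWrow i]
  have hxf : ∀ i, x i (fun _ => false) = -1 := fun i => by
    have := hWrow i
    simp [hx, sgn]
    linarith [hWrow i]
  have hrhs : τ = (2 / n : ℝ) * ∑ i, μ i := by
    rw [hτ]
    have : ∀ i : Fin n, Y i (fun _ => true) - Y i (fun _ => false) = 2 * μ i := by
      intro i; rw [hY, hY, hxt, hxf]; ring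
    simp_rw [this]
    rw [← Finset.mul_sum]
    ring
  rw [hlhs, hrhs]
end

section
/- Suppose β_i = 0 for all i ∈ {1,…,n}, E[z_j] = 0 for all j ∈ {1,…,m} under D, and Var[x_i(z)] > 0 for all i. Then the mean squared error of the ERL estimator is bounded by E[(τ̂ − τ)²] ≤ (4/n²) [ Σ_{i=1}^n μ_i² (1/Var[x_i] − 1) + 2 Σ_{1≤i<j≤n} μ_i μ_j ( E[(x_i x_j)²] / (Var[x_i] Var[x_j]) − 1 ) ]. -/
open Finset Matrix

section helpers

variable {α : Type*} [Fintype α] {D : α → ℝ}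

lemma pexp_congr {f g : α → ℝ} (h : ∀ ω, f ω = g ω) : pexp D f = pexp D g := by
  simp only [pexp]
  exact Finset.sum_congr rfl fun ω _ => by rw [h ω]

lemma pexp_add (f g : α → ℝ) : pexp D (fun ω => f ω + g ω) = pexp D f + pexp D g := by
  simp [pexp, mul_add, Finset.sum_add_distrib]

lemma pexp_smul (c : ℝ) (f : α → ℝ) : pexp D (fun ω => c * f ω) = c * pexp D f := by
  simp [pexp, Finset.mul_sum, mul_left_comm]

lemma pexp_const (hD1 : ∑ ω, D ω = 1) (c : ℝ) : pexp D (fun _ => c) = c := by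
  simp [pexp, ← Finset.sum_mul, hD1]

lemma pexp_mono (hD0 : ∀ ω, 0 ≤ D ω) {f g : α → ℝ} (h : ∀ ω, f ω ≤ g ω) :
    pexp D f ≤ pexp D g :=
  Finset.sum_le_sum fun ω _ => mul_le_mul_of_nonneg_left (h ω) (hD0 ω)

lemma pexp_sum {ι : Type*} (s : Finset ι) (f : ι → α → ℝ) :
    pexp D (fun ω => ∑ i ∈ s, f i ω) = ∑ i ∈ s, pexp D (f i) := by
  simp only [pexp, Finset.mul_sum]
  exact Finset.sum_comm

end helpers

lemma double_sum_split {N : ℕ} (f : Fin N → Fin N → ℝ) (hsym : ∀ i j, f i j = f j i) :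
    ∑ i, ∑ j, f i j = ∑ i, f i i + 2 * ∑ i, ∑ j ∈ Finset.Ioi i, f i j := by
  have h1 : ∀ i : Fin N, ∑ j, f i j
      = f i i + (∑ j ∈ Finset.Ioi i, f i j + ∑ j ∈ Finset.Iio i, f i j) := by
    intro i
    have hu : (Finset.univ : Finset (Fin N)) = Finset.Iio i ∪ Finset.Ici i := by
      ext j; simp [lt_or_ge]
    have hd : Disjoint (Finset.Iio i) (Finset.Ici i) := by
      simp [Finset.disjoint_left]
    rw [hu, Finset.sum_union hd, Finset.Ici_eq_cons_Ioi, Finset.sum_cons]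
    ring
  have h2 : ∑ i, ∑ j ∈ Finset.Iio i, f i j = ∑ i, ∑ j ∈ Finset.Ioi i, f i j := by
    rw [Finset.sum_comm' (t := fun i => Finset.Iio i) (s' := fun j => Finset.Ioi j)
      (t' := Finset.univ) (by intro a b; simp)]
    exact Finset.sum_congr rfl fun j _ => Finset.sum_congr rfl fun i _ => hsym i j
  simp only [h1]
  rw [Finset.sum_add_distrib, Finset.sum_add_distrib, h2]
  ring

/-- MSE bound for the ERL estimator when all intercepts vanish and each
treatment assignment is mean-zero (`E[z_j] = 0` for all `j`). -/
theorem erl_mse_bound_zero_intercepts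
    (n m : ℕ) (hn : 0 < n) (hm : 0 < m)
    (W : Matrix (Fin n) (Fin m) ℝ)
    (hWnn : ∀ i j, 0 ≤ W i j)
    (hWrow : ∀ i, ∑ j, W i j = 1)
    (D : (Fin m → Bool) → ℝ) (hD0 : ∀ ω, 0 ≤ D ω) (hD1 : ∑ ω, D ω = 1)
    (hz : ∀ j : Fin m, pexp D (fun ω => sgn (ω j)) = 0)
    (μ β : Fin n → ℝ)
    (hβ : ∀ i, β i = 0)
    (x : Fin n → (Fin m → Bool) → ℝ)
    (hx : ∀ i ω, x i ω = ∑ j, W i j * sgn (ω j))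
    (Y : Fin n → (Fin m → Bool) → ℝ)
    (hY : ∀ i ω, Y i ω = μ i * x i ω + β i)
    (hvar : ∀ i, 0 < pvar D (x i))
    (τhat : (Fin m → Bool) → ℝ)
    (hτhat : ∀ ω, τhat ω = (2 / n : ℝ) *
      ∑ i, Y i ω * ((x i ω - pexp D (x i)) / pvar D (x i)))
    (τ : ℝ)
    (hτ : τ = (1 / n : ℝ) * ∑ i, (Y i (fun _ => true) - Y i (fun _ => false))) :
    pexp D (fun ω => (τhat ω - τ) ^ 2)
      ≤ (4 / (n : ℝ) ^ 2) *
        (∑ i, μ i ^ 2 * (1 / pvar D (x i) - 1)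
          + 2 * ∑ i, ∑ j ∈ Finset.Ioi i,
              μ i * μ j *
                (pexp D (fun ω => (x i ω * x j ω) ^ 2)
                  / (pvar D (x i) * pvar D (x j)) - 1)) := by
  -- notation
  set σ : Fin n → ℝ := fun i => pvar D (x i) with hσdef
  -- mean zero
  have hmean : ∀ i, pexp D (x i) = 0 := by
    intro i
    have : pexp D (x i) = ∑ j, W i j * pexp D (fun ω => sgn (ω j)) := by
      simp only [pexp, hx, Finset.mul_sum]
      rw [Finset.sum_comm]
      refine Finset.sum_congr rfl fun j _ => ?_
      exact Finset.sum_congr rfl fun ω _ => by ring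
    rw [this]
    simp [hz]
  -- variance = second moment
  have hB : ∀ i, σ i = pexp D (fun ω => (x i ω) ^ 2) := by
    intro i
    simp only [hσdef, pvar, hmean i, sub_zero]
  -- |x| ≤ 1
  have hxle : ∀ i ω, |x i ω| ≤ 1 := by
    intro i ω
    rw [hx]
    calc |∑ j, W i j * sgn (ω j)| ≤ ∑ j, |W i j * sgn (ω j)| :=
          Finset.abs_sum_le_sum_abs _ _
      _ = ∑ j, W i j := by
          refine Finset.sum_congr rfl fun j _ => ?_
          rw [abs_mul, abs_of_nonneg (hWnn i j)]
          cases ω j <;> simp [sgn]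
      _ = 1 := hWrow i
  -- τ = (2/n) ∑ μ
  have hx1 : ∀ i, x i (fun _ => true) = 1 := by
    intro i; rw [hx]; simp [sgn, hWrow i]
  have hx0 : ∀ i, x i (fun _ => false) = -1 := by
    intro i
    rw [hx]
    have h : ∀ j ∈ Finset.univ, W i j * sgn ((fun _ : Fin m => false) j) = -W i j :=
      fun j _ => by simp [sgn]
    rw [Finset.sum_congr rfl h, Finset.sum_neg_distrib, hWrow i]
  have hτ' : τ = (2 / n : ℝ) * ∑ i, μ i := by
    rw [hτ]
    rw [show ∑ i, (Y i (fun _ => true) - Y i (fun _ => false)) = ∑ i, 2 * μ i from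
      Finset.sum_congr rfl fun i _ => by rw [hY, hY, hβ, hx1, hx0]; ring]
    rw [← Finset.mul_sum]
    ring
  -- the centered summand
  set g : Fin n → (Fin m → Bool) → ℝ := fun i ω => (x i ω) ^ 2 / σ i - 1 with hgdef
  have hdiff : ∀ ω, τhat ω - τ = (2 / n : ℝ) * ∑ i, μ i * g i ω := by
    intro ω
    rw [hτhat, hτ', ← mul_sub, ← Finset.sum_sub_distrib]
    congr 1
    refine Finset.sum_congr rfl fun i _ => ?_
    rw [hY, hβ, hmean, hgdef]
    simp only [sub_zero, add_zero]
    ring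
  -- covariance terms
  set c : Fin n → Fin n → ℝ := fun i j => pexp D (fun ω => g i ω * g j ω) with hcdef
  have hc : ∀ i j, c i j
      = pexp D (fun ω => (x i ω * x j ω) ^ 2) / (σ i * σ j) - 1 := by
    intro i j
    have hi : σ i ≠ 0 := (hvar i).ne'
    have hj : σ j ≠ 0 := (hvar j).ne'
    have step : c i j = (1 / (σ i * σ j)) * pexp D (fun ω => (x i ω * x j ω) ^ 2)
        + ((-(1 / σ i)) * pexp D (fun ω => (x i ω) ^ 2)
          + ((-(1 / σ j)) * pexp D (fun ω => (x j ω) ^ 2) + 1)) := by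
      simp only [hcdef]
      rw [show (fun ω => g i ω * g j ω)
          = (fun ω => (1 / (σ i * σ j)) * (x i ω * x j ω) ^ 2
            + ((-(1 / σ i)) * (x i ω) ^ 2 + ((-(1 / σ j)) * (x j ω) ^ 2 + 1))) from
        funext fun ω => by rw [hgdef]; field_simp; ring]
      rw [pexp_add, pexp_smul, pexp_add, pexp_smul, pexp_add, pexp_smul, pexp_const hD1]
    rw [step, ← hB i, ← hB j]
    field_simp
    ring
  -- diagonal bound
  have hdiag : ∀ i, c i i ≤ 1 / σ i - 1 := by
    intro i
    rw [hc i i]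
    have hi := hvar i
    have h4 : pexp D (fun ω => (x i ω * x i ω) ^ 2) ≤ pexp D (fun ω => (x i ω) ^ 2) := by
      refine pexp_mono hD0 fun ω => ?_
      have h1 : (x i ω) ^ 2 ≤ 1 := by
        have := abs_le.mp (hxle i ω)
        nlinarith [this.1, this.2]
      nlinarith [sq_nonneg (x i ω)]
    rw [← hB i] at h4
    have h5 : pexp D (fun ω => (x i ω * x i ω) ^ 2) / (σ i * σ i) ≤ σ i / (σ i * σ i) :=
      (div_le_div_iff_of_pos_right (by positivity)).mpr h4
    have h6 : σ i / (σ i * σ i) = 1 / σ i := by field_simp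
    linarith [h5, h6.le]
  -- symmetry
  have hcsymm : ∀ i j, c i j = c j i := by
    intro i j
    simp only [hcdef]
    exact pexp_congr fun ω => mul_comm _ _
  -- main identity
  have key : pexp D (fun ω => (τhat ω - τ) ^ 2)
      = (4 / (n : ℝ) ^ 2) * ∑ i, ∑ j, μ i * μ j * c i j := by
    have e1 : (fun ω => (τhat ω - τ) ^ 2)
        = (fun ω => (4 / (n : ℝ) ^ 2) * ∑ i, ∑ j, (μ i * μ j) * (g i ω * g j ω)) := by
      funext ω
      rw [hdiff ω]
      rw [show ∑ i, ∑ j, (μ i * μ j) * (g i ω * g j ω)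
          = (∑ i, μ i * g i ω) * (∑ j, μ j * g j ω) from by
        rw [Finset.sum_mul_sum]
        exact Finset.sum_congr rfl fun i _ => Finset.sum_congr rfl fun j _ => by ring]
      ring
    rw [e1, pexp_smul]
    congr 1
    rw [pexp_sum]
    refine Finset.sum_congr rfl fun i _ => ?_
    rw [pexp_sum]
    refine Finset.sum_congr rfl fun j _ => ?_
    exact pexp_smul (μ i * μ j) (fun ω => g i ω * g j ω)
  have hsplit : ∑ i, ∑ j, μ i * μ j * c i j
      = ∑ i, μ i * μ i * c i i + 2 * ∑ i, ∑ j ∈ Finset.Ioi i, μ i * μ j * c i j :=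
    double_sum_split (fun i j => μ i * μ j * c i j)
      (fun i j => by show μ i * μ j * c i j = μ j * μ i * c j i; rw [hcsymm i j]; ring)
  rw [key, hsplit]
  refine mul_le_mul_of_nonneg_left ?_ (by positivity)
  refine add_le_add ?_ ?_
  · refine Finset.sum_le_sum fun i _ => ?_
    calc μ i * μ i * c i i = μ i ^ 2 * c i i := by ring
      _ ≤ μ i ^ 2 * (1 / σ i - 1) :=
        mul_le_mul_of_nonneg_left (hdiag i) (sq_nonneg _)
  · refine le_of_eq ?_
    congr 1
    refine Finset.sum_congr rfl fun i _ => Finset.sum_congr rfl fun j _ => ?_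
    rw [hc i j]
end

section
/- Fix i ∈ {1,…,n} with β_i = 0, E[x_i(z)] = 0, Var[x_i(z)] > 0 under D, and |x_i(z)| ≤ 1 for all z ∈ {-1,1}^m. Then the individual estimator τ̂_i(z) = 2 Y_i(z)(x_i(z) − E[x_i])/Var[x_i] satisfies Var(τ̂_i) ≤ 4 μ_i² (1/Var[x_i] − 1). -/
open Finset Matrix

/-- For a fixed `i` with zero intercept, mean-zero exposure, positive
exposure variance and `|x_i(z)| ≤ 1` for all `z`, the individual estimator satisfies
`Var(τ̂_i) ≤ 4 μ_i² (1/Var[x_i] − 1)`. -/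
theorem erl_individual_variance_bound_zero_intercept
    (n m : ℕ) (hn : 0 < n) (hm : 0 < m)
    (W : Matrix (Fin n) (Fin m) ℝ)
    (D : (Fin m → Bool) → ℝ) (hD0 : ∀ ω, 0 ≤ D ω) (hD1 : ∑ ω, D ω = 1)
    (i : Fin n) (μi βi : ℝ)
    (hβi : βi = 0)
    (x : (Fin m → Bool) → ℝ)
    (hx : ∀ ω, x ω = ∑ j, W i j * sgn (ω j))
    (hmean : pexp D x = 0)
    (hvar : 0 < pvar D x)
    (hbdd : ∀ ω, |x ω| ≤ 1)
    (Y : (Fin m → Bool) → ℝ)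
    (hY : ∀ ω, Y ω = μi * x ω + βi)
    (τind : (Fin m → Bool) → ℝ)
    (hτind : ∀ ω, τind ω = 2 * Y ω * ((x ω - pexp D x) / pvar D x)) :
    pvar D τind ≤ 4 * μi ^ 2 * (1 / pvar D x - 1) := by
  set v := pvar D x with hv
  have hvne : v ≠ 0 := ne_of_gt hvar
  -- τind in closed form
  have hτ : ∀ ω, τind ω = (2 * μi / v) * x ω ^ 2 := by
    intro ω
    rw [hτind, hY, hβi, hmean]
    field_simp
    ring
  -- second moment equals variance
  have he2 : pexp D (fun ω => x ω ^ 2) = v := by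
    rw [hv]
    simp [pvar, hmean]
  -- mean of τind
  have hEτ : pexp D τind = 2 * μi / v * v := by
    have : pexp D τind = 2 * μi / v * pexp D (fun ω => x ω ^ 2) := by
      unfold pexp
      rw [Finset.mul_sum]
      exact Finset.sum_congr rfl (fun ω _ => by simp only [hτ ω]; ring)
    rw [this, he2]
  -- variance of τind
  have hvarτ : pvar D τind = (2 * μi / v) ^ 2 *
      (pexp D (fun ω => x ω ^ 4) - v ^ 2) := by
    have hE4 : pexp D (fun ω => (x ω ^ 2 - v) ^ 2)
        = pexp D (fun ω => x ω ^ 4) - v ^ 2 := by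
      have : pexp D (fun ω => (x ω ^ 2 - v) ^ 2)
          = pexp D (fun ω => x ω ^ 4) - 2 * v * pexp D (fun ω => x ω ^ 2)
            + v ^ 2 * ∑ ω, D ω := by
        unfold pexp
        rw [Finset.mul_sum, Finset.mul_sum, ← Finset.sum_sub_distrib,
          ← Finset.sum_add_distrib]
        exact Finset.sum_congr rfl (fun ω _ => by ring)
      rw [this, he2, hD1]; ring
    unfold pvar
    rw [hEτ]
    rw [← hE4]
    unfold pexp
    rw [Finset.mul_sum]
    exact Finset.sum_congr rfl (fun ω _ => by simp only [hτ ω]; ring)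
  -- fourth moment bounded by second moment
  have h4le : pexp D (fun ω => x ω ^ 4) ≤ v := by
    rw [← he2]
    unfold pexp
    apply Finset.sum_le_sum
    intro ω _
    have hb := hbdd ω
    have hx2 : x ω ^ 2 ≤ 1 := by
      nlinarith [abs_nonneg (x ω), sq_abs (x ω)]
    have : x ω ^ 4 ≤ x ω ^ 2 := by nlinarith [sq_nonneg (x ω)]
    exact mul_le_mul_of_nonneg_left this (hD0 ω)
  rw [hvarτ]
  have hkey : (2 * μi / v) ^ 2 * (v - v ^ 2) = 4 * μi ^ 2 * (1 / v - 1) := by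
    field_simp
    ring
  calc (2 * μi / v) ^ 2 * (pexp D (fun ω => x ω ^ 4) - v ^ 2)
      ≤ (2 * μi / v) ^ 2 * (v - v ^ 2) := by
        apply mul_le_mul_of_nonneg_left _ (sq_nonneg _)
        linarith
    _ = 4 * μi ^ 2 * (1 / v - 1) := hkey
end

section
/- Let 𝒞 = {C_1,…,C_k} be a partition of {1,…,m}, let p ∈ (0,1), and let z be drawn from the independent cluster design D(𝒞, p). Then for φ ≥ 0, the Exposure-Design objective satisfies Σ_{i=1}^n Var[x_i] − φ Σ_{i≠j} Cov(x_i, x_j) = 4p(1−p) · Σ_{r=1}^k Σ_{i ∈ C_r} Σ_{j ∈ C_r} ω_{ij}, where ω_{ij} = (1+φ) Σ_{k=1}^n W_{ki} W_{kj} − φ (Σ_{k=1}^n W_{ki})(Σ_{k=1}^n W_{kj}). -/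
open Finset Matrix

lemma prod_formula (k : ℕ) (p : ℝ) (F : Fin k → Bool → ℝ) :
    ∑ η : Fin k → Bool, (∏ r, (if η r then p else 1 - p)) * ∏ r, F r (η r)
      = ∏ r, (p * F r true + (1 - p) * F r false) := by
  have h : ∀ η : Fin k → Bool, (∏ r, (if η r then p else 1 - p)) * ∏ r, F r (η r)
      = ∏ r, ((if η r then p else 1 - p) * F r (η r)) := fun η =>
    (Finset.prod_mul_distrib).symm
  simp_rw [h]
  have key := Finset.prod_univ_sum (fun _ : Fin k => (Finset.univ : Finset Bool))
    (fun r b => (if b then p else 1 - p) * F r b)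
  rw [Fintype.piFinset_univ] at key
  rw [← key]
  refine Finset.prod_congr rfl fun r _ => ?_
  rw [show ∑ b ∈ (Finset.univ : Finset Bool), (if b then p else 1 - p) * F r b
      = ∑ b : Bool, (if b then p else 1 - p) * F r b from rfl, Fintype.sum_bool]
  simp

lemma exp_pair (k : ℕ) (p : ℝ) (r s : Fin k) :
    ∑ η : Fin k → Bool, (∏ t, (if η t then p else 1 - p)) *
      ((sgn (η r) - (2*p-1)) * (sgn (η s) - (2*p-1)))
      = if r = s then 4*p*(1-p) else 0 := by
  have hprod : ∀ η : Fin k → Bool,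
      (sgn (η r) - (2*p-1)) * (sgn (η s) - (2*p-1))
        = ∏ t, ((if t = r then sgn (η t) - (2*p-1) else 1) *
                (if t = s then sgn (η t) - (2*p-1) else 1)) := by
    intro η
    rw [Finset.prod_mul_distrib, Finset.prod_ite_eq', Finset.prod_ite_eq']
    simp
  simp_rw [hprod]
  rw [prod_formula k p (fun t b => (if t = r then sgn b - (2*p-1) else 1) *
      (if t = s then sgn b - (2*p-1) else 1))]
  by_cases h : r = s
  · subst h
    rw [if_pos rfl]
    rw [Finset.prod_eq_single r]
    · simp [sgn]; ring
    · intro t _ ht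
      rw [if_neg ht, if_neg ht]; ring
    · simp
  · rw [if_neg h]
    apply Finset.prod_eq_zero (Finset.mem_univ r)
    rw [if_pos rfl, if_neg h, if_pos rfl, if_neg h]
    simp [sgn]; ring

lemma exp_single (k : ℕ) (p : ℝ) (r : Fin k) :
    ∑ η : Fin k → Bool, (∏ t, (if η t then p else 1 - p)) * sgn (η r)
      = 2*p - 1 := by
  have hprod : ∀ η : Fin k → Bool,
      sgn (η r) = ∏ t, (if t = r then sgn (η t) else 1) := by
    intro η; rw [Finset.prod_ite_eq']; simp
  simp_rw [hprod]
  rw [prod_formula k p (fun t b => if t = r then sgn b else 1)]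
  rw [Finset.prod_eq_single r]
  · simp [sgn]; ring
  · intro t _ ht; rw [if_neg ht, if_neg ht]; ring
  · simp


/-- Under the independent cluster design `D(𝒞, p)` (clusters encoded by
the assignment map `c : Fin m → Fin k`, cluster-level coins `η : Fin k → Bool`, and
`z_j = sgn (η (c j))`), the Exposure-Design objective equals
`4p(1−p)` times the in-cluster sum of the correlation-clustering weights `ω_{ab}`. -/
theorem exposure_design_cluster_formula
    (n m k : ℕ) (hn : 0 < n) (hm : 0 < m)
    (W : Matrix (Fin n) (Fin m) ℝ)
    (c : Fin m → Fin k) (hc : Function.Surjective c)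
    (p : ℝ) (hp0 : 0 < p) (hp1 : p < 1)
    (φ : ℝ) (hφ : 0 ≤ φ)
    (D : (Fin k → Bool) → ℝ)
    (hD : ∀ η, D η = ∏ r, (if η r then p else 1 - p))
    (x : Fin n → (Fin k → Bool) → ℝ)
    (hx : ∀ i η, x i η = ∑ j, W i j * sgn (η (c j)))
    (w : Fin m → Fin m → ℝ)
    (hw : ∀ a b, w a b = (1 + φ) * ∑ l, W l a * W l b
        - φ * (∑ l, W l a) * (∑ l, W l b)) :
    (∑ i, pvar D (x i))
      - φ * ∑ pr ∈ (Finset.univ : Finset (Fin n)).offDiag, pcov D (x pr.1) (x pr.2)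
      = 4 * p * (1 - p) * ∑ a, ∑ b, (if c a = c b then w a b else 0) := by

  have hE : ∀ i, pexp D (x i) = ∑ a, W i a * (2*p-1) := by
    intro i
    unfold pexp
    simp_rw [hx, hD, Finset.mul_sum]
    rw [Finset.sum_comm]
    refine Finset.sum_congr rfl fun a _ => ?_
    have h1 : ∀ η : Fin k → Bool,
        (∏ r, (if η r then p else 1 - p)) * (W i a * sgn (η (c a)))
        = W i a * ((∏ r, (if η r then p else 1 - p)) * sgn (η (c a))) := fun η => by ring
    simp_rw [h1, ← Finset.mul_sum, exp_single]
  have hdiff : ∀ (i : Fin n) η, x i η - pexp D (x i)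
      = ∑ a, W i a * (sgn (η (c a)) - (2*p-1)) := by
    intro i η
    rw [hE, hx, ← Finset.sum_sub_distrib]
    exact Finset.sum_congr rfl fun a _ => by ring
  have hcov : ∀ i j, pcov D (x i) (x j)
      = ∑ a, ∑ b, (if c a = c b then 4*p*(1-p) * (W i a * W j b) else 0) := by
    intro i j
    unfold pcov
    simp_rw [hdiff]
    unfold pexp
    simp_rw [Finset.sum_mul_sum, hD, Finset.mul_sum]
    rw [Finset.sum_comm]
    refine Finset.sum_congr rfl fun a _ => ?_
    rw [Finset.sum_comm]
    refine Finset.sum_congr rfl fun b _ => ?_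
    have h2 : ∀ η : Fin k → Bool,
        (∏ r, (if η r then p else 1 - p)) *
          (W i a * (sgn (η (c a)) - (2*p-1)) * (W j b * (sgn (η (c b)) - (2*p-1))))
        = (W i a * W j b) * ((∏ r, (if η r then p else 1 - p)) *
          ((sgn (η (c a)) - (2*p-1)) * (sgn (η (c b)) - (2*p-1)))) := fun η => by ring
    simp_rw [h2, ← Finset.mul_sum, exp_pair]
    split_ifs <;> ring
  have hvar : ∀ i, pvar D (x i) = pcov D (x i) (x i) := by
    intro i
    unfold pvar pcov
    simp_rw [pow_two]
  have hoff : ∀ (a b : Fin m), ∑ pr ∈ (Finset.univ : Finset (Fin n)).offDiag, W pr.1 a * W pr.2 b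
      = (∑ l, W l a) * (∑ l, W l b) - ∑ l, W l a * W l b := by
    intro a b
    have h1 : ∑ pr ∈ ((Finset.univ : Finset (Fin n)) ×ˢ Finset.univ), W pr.1 a * W pr.2 b
        = (∑ l, W l a) * (∑ l, W l b) := by
      rw [Finset.sum_mul_sum, Finset.sum_product]
    rw [← Finset.diag_union_offDiag,
      Finset.sum_union (Finset.disjoint_diag_offDiag _), Finset.sum_diag] at h1
    linarith [h1]
  simp_rw [hvar, hcov]
  have e1 : ∑ i : Fin n, ∑ a, ∑ b, (if c a = c b then 4*p*(1-p)*(W i a * W i b) else 0)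
      = ∑ a, ∑ b, (if c a = c b then 4*p*(1-p) * ∑ i, W i a * W i b else 0) := by
    rw [Finset.sum_comm]
    refine Finset.sum_congr rfl fun a _ => ?_
    rw [Finset.sum_comm]
    refine Finset.sum_congr rfl fun b _ => ?_
    by_cases h : c a = c b
    · simp only [if_pos h, Finset.mul_sum]
    · simp only [if_neg h, Finset.sum_const_zero]
  have e2 : ∑ pr ∈ (Finset.univ : Finset (Fin n)).offDiag,
        ∑ a, ∑ b, (if c a = c b then 4*p*(1-p)*(W pr.1 a * W pr.2 b) else 0)
      = ∑ a, ∑ b, (if c a = c b then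
          4*p*(1-p) * ∑ pr ∈ (Finset.univ : Finset (Fin n)).offDiag, W pr.1 a * W pr.2 b else 0) := by
    rw [Finset.sum_comm]
    refine Finset.sum_congr rfl fun a _ => ?_
    rw [Finset.sum_comm]
    refine Finset.sum_congr rfl fun b _ => ?_
    by_cases h : c a = c b
    · simp only [if_pos h, Finset.mul_sum]
    · simp only [if_neg h, Finset.sum_const_zero]
  have e3 : 4*p*(1-p) * ∑ a, ∑ b, (if c a = c b then w a b else 0)
      = ∑ a, ∑ b, (if c a = c b then 4*p*(1-p) * w a b else 0) := by
    rw [Finset.mul_sum]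
    refine Finset.sum_congr rfl fun a _ => ?_
    rw [Finset.mul_sum]
    refine Finset.sum_congr rfl fun b _ => ?_
    by_cases h : c a = c b <;> simp [h]
  have e4 : φ * ∑ a, ∑ b, (if c a = c b then
        4*p*(1-p) * ∑ pr ∈ (Finset.univ : Finset (Fin n)).offDiag, W pr.1 a * W pr.2 b else 0)
      = ∑ a, ∑ b, (if c a = c b then
        φ * (4*p*(1-p) * ∑ pr ∈ (Finset.univ : Finset (Fin n)).offDiag, W pr.1 a * W pr.2 b) else 0) := by
    rw [Finset.mul_sum]
    refine Finset.sum_congr rfl fun a _ => ?_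
    rw [Finset.mul_sum]
    refine Finset.sum_congr rfl fun b _ => ?_
    by_cases h : c a = c b <;> simp [h]
  rw [e1, e2, e3, e4]
  simp_rw [← Finset.sum_sub_distrib]
  refine Finset.sum_congr rfl fun a _ => Finset.sum_congr rfl fun b _ => ?_
  by_cases h : c a = c b
  · simp only [if_pos h]
    rw [hoff, hw]
    ring
  · simp only [if_neg h]
    ring
end
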